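/- For any invertible complex matrix $a \in \mathrm{GL}(d,\mathbb{C})$ and Hermitian positive definite matrices $p_1, p_2$, the Riemannian distance $\delta(p_1,p_2) = \lVert \mathrm{Log}(p_1^{-1/2} p_2 p_1^{-1/2}) \rVert_F$ is invariant under congruence: $\delta(a^* p_1 a, a^* p_2 a) = \delta(p_1, p_2)$. -/

import Mathlib

set_option maxHeartbeats 800000

open Matrix
open scoped ComplexOrder Classical

variable {d : ℕ}

/-- Frobenius norm of a complex matrix. -/
noncomputable def frob (A : Matrix (Fin d) (Fin d) ℂ) : ℝ :=
  Real.sqrt (∑ i, ∑ j, ‖A i j‖ ^ 2)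

/-- The unique positive semidefinite square root (junk value `0` if not PSD). -/

noncomputable def msqrt (A : Matrix (Fin d) (Fin d) ℂ) : Matrix (Fin d) (Fin d) ℂ :=
  if h : A.PosSemidef then
    (h.1.eigenvectorUnitary : Matrix (Fin d) (Fin d) ℂ) *
      Matrix.diagonal ((↑) ∘ (Real.sqrt ·) ∘ h.1.eigenvalues) *
      (star h.1.eigenvectorUnitary : Matrix (Fin d) (Fin d) ℂ)
  else 0

/-- Principal matrix logarithm of a Hermitian (positive definite) matrix, via the
spectral decomposition (junk value `0` otherwise). -/

noncomputable def mLog (A : Matrix (Fin d) (Fin d) ℂ) : Matrix (Fin d) (Fin d) ℂ :=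
  if h : A.IsHermitian then
    (h.eigenvectorUnitary : Matrix (Fin d) (Fin d) ℂ) *
      Matrix.diagonal (fun i => (Real.log (h.eigenvalues i) : ℂ)) *
      star (h.eigenvectorUnitary : Matrix (Fin d) (Fin d) ℂ)
  else 0

/-- Matrix exponential. -/
noncomputable def mExp (A : Matrix (Fin d) (Fin d) ℂ) : Matrix (Fin d) (Fin d) ℂ :=
  (NormedSpace.expSeries ℂ (Matrix (Fin d) (Fin d) ℂ)).sum A

/-- Real power of an HPD matrix: `X^t = Exp(t Log X)`. -/
noncomputable def mpow (A : Matrix (Fin d) (Fin d) ℂ) (t : ℝ) : Matrix (Fin d) (Fin d) ℂ :=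
  mExp ((t : ℂ) • mLog A)

/-- Affine-invariant Riemannian distance on HPD matrices. -/
noncomputable def rdist (p q : Matrix (Fin d) (Fin d) ℂ) : ℝ :=
  frob (mLog ((msqrt p)⁻¹ * q * (msqrt p)⁻¹))

/-- Geodesic midpoint of two HPD matrices. -/
noncomputable def mid (p q : Matrix (Fin d) (Fin d) ℂ) : Matrix (Fin d) (Fin d) ℂ :=
  msqrt p * msqrt ((msqrt p)⁻¹ * q * (msqrt p)⁻¹) * msqrt p

/-- Riemannian exponential map at `p`. -/
noncomputable def rExp (p h : Matrix (Fin d) (Fin d) ℂ) : Matrix (Fin d) (Fin d) ℂ :=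
  msqrt p * mExp ((msqrt p)⁻¹ * h * (msqrt p)⁻¹) * msqrt p

/-- Riemannian logarithm map at `p`. -/
noncomputable def rLog (p q : Matrix (Fin d) (Fin d) ℂ) : Matrix (Fin d) (Fin d) ℂ :=
  msqrt p * mLog ((msqrt p)⁻¹ * q * (msqrt p)⁻¹) * msqrt p

-- auxiliary lemmas

lemma posDef_conj {d : ℕ} {M B : Matrix (Fin d) (Fin d) ℂ} (hM : M.PosDef) (hB : IsUnit B) :
    (Bᴴ * M * B).PosDef := by
  exact hM.conjTranspose_mul_mul_same (Matrix.mulVec_injective_of_isUnit hB)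

lemma posDef_of_posSemidef_isUnit {d : ℕ} {S : Matrix (Fin d) (Fin d) ℂ}
    (hS : S.PosSemidef) (h : IsUnit S) : S.PosDef := by
  exact hS.posDef_iff_isUnit.mpr h

/-- Conjugation by a unitary as a star algebra homomorphism. -/
noncomputable def conjSAH {d : ℕ} (u : Matrix (Fin d) (Fin d) ℂ)
    (hu1 : star u * u = 1) (hu2 : u * star u = 1) :
    Matrix (Fin d) (Fin d) ℂ →⋆ₐ[ℂ] Matrix (Fin d) (Fin d) ℂ where
  toFun X := star u * X * u
  map_one' := by show star u * 1 * u = 1; rw [mul_one, hu1]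
  map_mul' X Y := by
    have e : ∀ Z : Matrix (Fin d) (Fin d) ℂ, u * (star u * Z) = Z := fun Z => by
      rw [← mul_assoc, hu2, one_mul]
    simp only [Matrix.mul_assoc, e]
  map_zero' := by simp
  map_add' X Y := by show star u * (X + Y) * u = _; rw [Matrix.mul_add, Matrix.add_mul]
  commutes' c := by
    simp only [Algebra.algebraMap_eq_smul_one, Matrix.mul_smul, Matrix.smul_mul, mul_one, hu1]
  map_star' X := by
    show star u * star X * u = star (star u * X * u)
    simp only [StarMul.star_mul, star_star, Matrix.mul_assoc]

lemma mLog_eq_cfc {d : ℕ} {M : Matrix (Fin d) (Fin d) ℂ} (hM : M.IsHermitian) :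
    mLog M = cfc Real.log M := by
  rw [mLog, dif_pos hM, hM.cfc_eq Real.log]
  rfl

lemma msqrt_eq_cfc {d : ℕ} {A : Matrix (Fin d) (Fin d) ℂ} (hA : A.PosSemidef) :
    msqrt A = cfc Real.sqrt A := by
  rw [msqrt, dif_pos hA, hA.1.cfc_eq Real.sqrt]
  rfl

lemma cfc_sqrt_mul_self {d : ℕ} {A : Matrix (Fin d) (Fin d) ℂ} (hA : A.PosSemidef) :
    cfc Real.sqrt A * cfc Real.sqrt A = A := by
  have hsa : IsSelfAdjoint A := hA.1
  rw [← cfc_mul Real.sqrt Real.sqrt A]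
  conv_rhs => rw [← cfc_id ℝ A]
  refine cfc_congr fun x hx => ?_
  rw [hA.1.spectrum_real_eq_range_eigenvalues] at hx
  obtain ⟨i, rfl⟩ := hx
  exact Real.mul_self_sqrt (hA.eigenvalues_nonneg i)

lemma mLog_conj {d : ℕ} {M u : Matrix (Fin d) (Fin d) ℂ} (hM : M.PosDef)
    (hu1 : star u * u = 1) (hu2 : u * star u = 1) :
    mLog (star u * M * u) = star u * mLog M * u := by
  have hM' : (star u * M * u).PosDef := by
    have := posDef_conj hM (by haveI := invertibleOfRightInverse u (star u) hu2; exact isUnit_of_invertible u)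
    simpa [Matrix.star_eq_conjTranspose] using this
  have hMsa : IsSelfAdjoint M := hM.1
  have hM'sa : IsSelfAdjoint (star u * M * u) := hM'.1
  have hf : ContinuousOn Real.log (spectrum ℝ M) := by
    apply Real.continuousOn_log.mono
    rw [hM.1.spectrum_real_eq_range_eigenvalues]
    rintro x ⟨i, rfl⟩
    exact (hM.eigenvalues_pos i).ne' ∘ id
  have hφ : Continuous (conjSAH u hu1 hu2) := by
    show Continuous fun X : Matrix (Fin d) (Fin d) ℂ => star u * X * u
    fun_prop
  have key := StarAlgHomClass.map_cfc (S := ℂ) (conjSAH u hu1 hu2) Real.log M hf hφ hMsa hM'sa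
  rw [mLog_eq_cfc hM.1, mLog_eq_cfc hM'.1]
  exact key.symm

lemma trace_star_mul_self {d : ℕ} (A : Matrix (Fin d) (Fin d) ℂ) :
    (star A * A).trace = ((∑ i, ∑ j, ‖A i j‖ ^ 2 : ℝ) : ℂ) := by
  have hz : ∀ z : ℂ, star z * z = ((‖z‖ ^ 2 : ℝ) : ℂ) := fun z => by
    rw [Complex.star_def, mul_comm, Complex.mul_conj']
    push_cast
    ring
  calc (star A * A).trace = ∑ i, ∑ j, star (A j i) * A j i := by
        simp [Matrix.trace, Matrix.mul_apply, Matrix.diag, Matrix.star_apply,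
          Matrix.star_eq_conjTranspose, Matrix.conjTranspose_apply]
    _ = ∑ i, ∑ j, ((‖A j i‖ ^ 2 : ℝ) : ℂ) := by simp only [hz]
    _ = _ := by rw [Finset.sum_comm]; norm_cast

lemma frob_conj {d : ℕ} {X u : Matrix (Fin d) (Fin d) ℂ}
    (hu1 : star u * u = 1) (hu2 : u * star u = 1) :
    frob (star u * X * u) = frob X := by
  have e : ∀ Z : Matrix (Fin d) (Fin d) ℂ, u * (star u * Z) = Z := fun Z => by
    rw [← mul_assoc, hu2, one_mul]
  have hstar : star (star u * X * u) = star u * star X * u := by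
    simp only [StarMul.star_mul, star_star, Matrix.mul_assoc]
  have h1 : (star u * star X * u) * (star u * X * u) = star u * ((star X * X) * u) := by
    simp only [Matrix.mul_assoc, e]
  have htr : (star (star u * X * u) * (star u * X * u)).trace = (star X * X).trace := by
    rw [hstar, h1, Matrix.trace_mul_comm, Matrix.mul_assoc, hu2, mul_one]
  rw [trace_star_mul_self, trace_star_mul_self] at htr
  have := Complex.ofReal_inj.mp htr
  rw [frob, frob, this]


/-- the affine-invariant Riemannian distance on HPD matrices is invariant
under congruence transformation `x ↦ a⋆ x a` by any invertible matrix `a`. -/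
theorem rdist_congruence_invariant {d : ℕ} (p₁ p₂ a : Matrix (Fin d) (Fin d) ℂ)
    (h₁ : p₁.PosDef) (h₂ : p₂.PosDef) (ha : IsUnit a) :
    rdist (aᴴ * p₁ * a) (aᴴ * p₂ * a) = rdist p₁ p₂ := by
  classical
  have hP1 : (aᴴ * p₁ * a).PosDef := posDef_conj h₁ ha
  set s : Matrix (Fin d) (Fin d) ℂ := msqrt p₁ with hs_def
  set t : Matrix (Fin d) (Fin d) ℂ := msqrt (aᴴ * p₁ * a) with ht_def
  have hs_eq : s = cfc Real.sqrt p₁ := by rw [hs_def]; exact msqrt_eq_cfc h₁.posSemidef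
  have ht_eq : t = cfc Real.sqrt (aᴴ * p₁ * a) := by rw [ht_def]; exact msqrt_eq_cfc hP1.posSemidef
  have hss : s * s = p₁ := by rw [hs_eq]; exact cfc_sqrt_mul_self h₁.posSemidef
  have htt : t * t = aᴴ * p₁ * a := by rw [ht_eq]; exact cfc_sqrt_mul_self hP1.posSemidef
  have hsH : sᴴ = s := by rw [hs_eq]; exact (cfc_predicate Real.sqrt p₁ : IsSelfAdjoint _)
  have htH : tᴴ = t := by rw [ht_eq]; exact (cfc_predicate Real.sqrt (aᴴ * p₁ * a) : IsSelfAdjoint _)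
  -- invertibility of the square roots
  have hdet : ∀ (S P : Matrix (Fin d) (Fin d) ℂ), S * S = P → P.PosDef → IsUnit S.det := by
    intro S P hSP hP
    have hd : S.det * S.det = P.det := by rw [← Matrix.det_mul, hSP]
    refine isUnit_iff_ne_zero.mpr fun h => hP.det_pos.ne' ?_
    rw [← hd, h, mul_zero]
  have hsU : IsUnit s.det := hdet s p₁ hss h₁
  have htU : IsUnit t.det := hdet t _ htt hP1
  have hsi : s⁻¹ * s = 1 := Matrix.nonsing_inv_mul s hsU
  have hsi2 : s * s⁻¹ = 1 := Matrix.mul_nonsing_inv s hsU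
  have hti : t⁻¹ * t = 1 := Matrix.nonsing_inv_mul t htU
  have hti2 : t * t⁻¹ = 1 := Matrix.mul_nonsing_inv t htU
  have hsiH : (s⁻¹)ᴴ = s⁻¹ := by rw [Matrix.conjTranspose_nonsing_inv, hsH]
  -- M is positive definite
  have hsiU : IsUnit s⁻¹ := by
    haveI := invertibleOfRightInverse s⁻¹ s hsi
    exact isUnit_of_invertible s⁻¹
  have hM : (s⁻¹ * p₂ * s⁻¹).PosDef := by
    have := posDef_conj h₂ hsiU
    rwa [hsiH] at this
  -- the unitary u
  set u : Matrix (Fin d) (Fin d) ℂ := s * a * t⁻¹ with hu_def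
  have htiH : (t⁻¹)ᴴ = t⁻¹ := by rw [Matrix.conjTranspose_nonsing_inv, htH]
  have hstaru : star u = t⁻¹ * aᴴ * s := by
    rw [hu_def, Matrix.star_eq_conjTranspose, Matrix.conjTranspose_mul,
      Matrix.conjTranspose_mul, htiH, hsH, Matrix.mul_assoc]
  have e1 : ∀ X : Matrix (Fin d) (Fin d) ℂ, s * (s * X) = p₁ * X := fun X => by
    rw [← Matrix.mul_assoc, hss]
  have e2 : ∀ X : Matrix (Fin d) (Fin d) ℂ, aᴴ * (p₁ * (a * X)) = t * (t * X) := fun X => by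
    calc aᴴ * (p₁ * (a * X)) = (aᴴ * p₁ * a) * X := by simp only [Matrix.mul_assoc]
    _ = (t * t) * X := by rw [htt]
    _ = t * (t * X) := by rw [Matrix.mul_assoc]
  have e3 : ∀ X : Matrix (Fin d) (Fin d) ℂ, t⁻¹ * (t * X) = X := fun X => by
    rw [← Matrix.mul_assoc, hti, one_mul]
  have f1 : ∀ X : Matrix (Fin d) (Fin d) ℂ, s * (s⁻¹ * X) = X := fun X => by
    rw [← Matrix.mul_assoc, hsi2, one_mul]
  have f2 : ∀ X : Matrix (Fin d) (Fin d) ℂ, s⁻¹ * (s * X) = X := fun X => by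
    rw [← Matrix.mul_assoc, hsi, one_mul]
  have hu1 : star u * u = 1 := by
    rw [hstaru, hu_def]
    simp only [Matrix.mul_assoc]
    rw [e1, e2, e3, hti2]
  have hu2 : u * star u = 1 := mul_eq_one_comm.mp hu1
  have keyid : t⁻¹ * (aᴴ * p₂ * a) * t⁻¹ = star u * (s⁻¹ * p₂ * s⁻¹) * u := by
    rw [hstaru, hu_def]
    simp only [Matrix.mul_assoc, f1, f2]
  rw [rdist, rdist, ← hs_def, ← ht_def, keyid, mLog_conj hM hu1 hu2, frob_conj hu1 hu2]
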